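/- (Lemma 1(ii)) Let i ∈ {1,…,n} be an index such that b_{i+1,n} = 0 (where i + 1 is read as 1 when i = n). Then for every j ∈ {1,…,n}, setting l = i + 1 − j + n·θ(j − i − 1), where θ is the Heaviside step function of a discrete variable (θ(x) = 1 if x ≥ 0 and θ(x) = 0 if x < 0), one has b_{j, k+l} = b_{i+1, k} for every integer k ≥ 1; that is, after a transient of length l, each sequence b_j coincides with the sequence b_{i+1}. -/

import Mathlib

/-!
STATEMENT 10 (Lemma 1(ii)). Let `i` be an index with `b_{i+1,n} = 0` (`i + 1`
wrapping around, as `Fin n` addition does). Then for every index `j`, setting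
`l = i + 1 − j + n·θ(j − i − 1)` with `θ` the Heaviside step function, one has
`b_{j,k+l} = b_{i+1,k}` for every integer `k ≥ 1`. (With 0-based `Fin n`
indices the paper's 1-based formula `l = (i+1) + 1 − (j+1) + n·θ((j+1) − (i+1) − 1)`
is literally `l = i + 1 − j + n·θ(j − i − 1)` in the 0-based values, computed
in `ℤ`; this quantity is always ≥ 1, and `Int.toNat` converts it to `ℕ`.)
-/

/-- The buffer sequence `(b_{i,j})_{j≥0}` built from `a`, starting cyclically at
index `i`: `b_{i,0} = 0`, `b_{i,j+1} = max{b_{i,j} + a_{σ_i(j+1)}, 0}` where the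
cyclic index `σ_i(j+1)` is `i + j` in `Fin n`. -/
noncomputable def bseq {n : ℕ} [NeZero n] (a : Fin n → ℝ) (i : Fin n) : ℕ → ℝ
  | 0 => 0
  | j + 1 => max (bseq a i j + a (i + Fin.ofNat n j)) 0

/-- Heaviside step function of a discrete (integer) variable:
`θ(x) = 1` if `x ≥ 0` and `θ(x) = 0` if `x < 0`. -/
def heaviside (x : ℤ) : ℤ := if 0 ≤ x then 1 else 0

open Finset
open Fin.NatCast

lemma bseq_zero' {n : ℕ} [NeZero n] (a : Fin n → ℝ) (x : Fin n) :
    bseq a x 0 = 0 := rfl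

lemma bseq_succ {n : ℕ} [NeZero n] (a : Fin n → ℝ) (x : Fin n) (k : ℕ) :
    bseq a x (k + 1) = max (bseq a x k + a (x + (k : Fin n))) 0 := rfl

lemma bseq_nonneg {n : ℕ} [NeZero n] (a : Fin n → ℝ) (x : Fin n) :
    ∀ k, 0 ≤ bseq a x k
  | 0 => le_refl 0
  | k + 1 => le_max_right _ _

lemma bseq_suffix_le {n : ℕ} [NeZero n] (a : Fin n → ℝ) (x : Fin n) :
    ∀ (k m : ℕ), m ≤ k → ∑ t ∈ Ico m k, a (x + (t : Fin n)) ≤ bseq a x k := by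
  intro k
  induction k with
  | zero =>
    intro m hm
    simp [Nat.le_zero.mp hm, bseq_zero']
  | succ k ih =>
    intro m hm
    rcases Nat.lt_succ_iff_lt_or_eq.mp (Nat.lt_succ_of_le hm) with h | h
    · have hmk : m ≤ k := Nat.lt_succ_iff.mp h
      rw [Finset.sum_Ico_succ_top hmk, bseq_succ]
      exact le_max_of_le_left (add_le_add_left (ih m hmk) _)
    · subst h
      simp [bseq_nonneg a x]

lemma bseq_le_cases {n : ℕ} [NeZero n] (a : Fin n → ℝ) (x : Fin n) :
    ∀ k : ℕ, bseq a x k ≤ 0 ∨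
      ∃ m, m < k ∧ bseq a x k ≤ ∑ t ∈ Ico m k, a (x + (t : Fin n)) := by
  intro k
  induction k with
  | zero => left; simp [bseq_zero']
  | succ k ih =>
    rw [bseq_succ]
    rcases le_or_gt (bseq a x k + a (x + (k : Fin n))) 0 with h | h
    · left; simp [h]
    · right
      rw [max_eq_left h.le]
      rcases ih with h0 | ⟨m, hm, hle⟩
      · refine ⟨k, k.lt_succ_self, ?_⟩
        rw [Finset.sum_Ico_succ_top le_rfl]
        simpa using add_le_add_right h0 (a (x + (k : Fin n)))
      · refine ⟨m, hm.trans k.lt_succ_self, ?_⟩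
        rw [Finset.sum_Ico_succ_top hm.le]
        exact add_le_add_left hle _

lemma bseq_shift {n : ℕ} [NeZero n] (a : Fin n → ℝ) (x : Fin n) (m : ℕ)
    (h : bseq a x m = 0) :
    ∀ k, bseq a x (m + k) = bseq a (x + (m : Fin n)) k := by
  intro k
  induction k with
  | zero => simpa [bseq_zero'] using h
  | succ k ih =>
    rw [← Nat.add_assoc, bseq_succ, bseq_succ, ih]
    congr 2
    push_cast
    rw [add_assoc]

lemma fin_natCast_add_self {n : ℕ} [NeZero n] (p : ℕ) :
    ((n + p : ℕ) : Fin n) = (p : Fin n) := by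
  push_cast
  simp

theorem bseq_transient_coincides {n : ℕ} [NeZero n] (hn : 2 ≤ n)
    (a : Fin n → ℝ) (ha : ∑ m, a m = 0) (i : Fin n)
    (hb : bseq a (i + 1) n = 0) (j : Fin n) :
    ∀ k : ℕ, 1 ≤ k →
      bseq a j
        (k + ((i.val : ℤ) + 1 - (j.val : ℤ) +
          (n : ℤ) * heaviside ((j.val : ℤ) - (i.val : ℤ) - 1)).toNat) =
      bseq a (i + 1) k := by
  intro k hk
  have hi := i.isLt
  have hj := j.isLt
  set L := ((i.val : ℤ) + 1 - (j.val : ℤ) +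
      (n : ℤ) * heaviside ((j.val : ℤ) - (i.val : ℤ) - 1)).toNat with hL
  have hspec : (j.val ≤ i.val ∧ L = i.val + 1 - j.val) ∨
      (i.val < j.val ∧ L = n + i.val + 1 - j.val) := by
    unfold heaviside at hL
    split at hL
    · right; omega
    · left; omega
  have hL1 : 1 ≤ L := by rcases hspec with ⟨h1, h2⟩ | ⟨h1, h2⟩ <;> omega
  have hLn : L ≤ n := by rcases hspec with ⟨h1, h2⟩ | ⟨h1, h2⟩ <;> omega
  have hkey : j + (L : Fin n) = i + 1 := by
    have h1 : j + (L : Fin n) = ((j.val + L : ℕ) : Fin n) := by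
      push_cast
      simp
    rcases hspec with ⟨hc1, hc2⟩ | ⟨hc1, hc2⟩
    · have : j.val + L = i.val + 1 := by omega
      rw [h1, this]
      push_cast
      simp
    · have : j.val + L = n + (i.val + 1) := by omega
      rw [h1, this, fin_natCast_add_self]
      push_cast
      simp
  have hbjL : bseq a j L = 0 := by
    refine le_antisymm ?_ (bseq_nonneg a j L)
    rcases bseq_le_cases a j L with h | ⟨m, hm, hle⟩
    · exact h
    · refine hle.trans ?_
      have hre : ∑ t ∈ Ico m L, a (j + (t : Fin n)) =
          ∑ t ∈ Ico (n - (L - m)) n, a ((i + 1) + (t : Fin n)) := by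
        rw [Finset.sum_Ico_eq_sum_range, Finset.sum_Ico_eq_sum_range]
        have hd : n - (n - (L - m)) = L - m := by omega
        rw [hd]
        refine Finset.sum_congr rfl fun s hs => ?_
        simp only [Finset.mem_range] at hs
        congr 1
        rw [← hkey]
        have e1 : ((m + s : ℕ) : Fin n) = ((L + (n - (L - m) + s) : ℕ) : Fin n) := by
          have harith : L + (n - (L - m) + s) = n + (m + s) := by omega
          rw [harith, fin_natCast_add_self]
        rw [e1]
        push_cast
        rw [add_assoc]
      rw [hre]
      calc ∑ t ∈ Ico (n - (L - m)) n, a ((i + 1) + (t : Fin n))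
          ≤ bseq a (i + 1) n := bseq_suffix_le a (i + 1) n _ (Nat.sub_le _ _)
        _ = 0 := hb
  rw [add_comm k L, bseq_shift a j L hbjL k, hkey]
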